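/- Let R₁, R₂ > 0 and t ∈ ℝ. The characteristic polynomial of the 4×4 real matrix with rows (0, −1/R₁ − 1, 0, t/R₁), (1/R₁ + 1, 0, −t/R₁, 0), (0, t/R₂, 0, −t/R₂ − 1), (−t/R₂, 0, t/R₂ + 1, 0) equals λ⁴ + (1/R₁² + 2(t² + R₂)/(R₁R₂) + t(t + 2R₂)/R₂² + 2)·λ² + (−t² + tR₁ + t + R₁R₂ + R₂)²/(R₁²R₂²). -/

import Mathlib

open Matrix Polynomial

set_option maxHeartbeats 2000000 in
/-- The characteristic polynomial `P⁰₊,₊(λ)` of the linearization of the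
classical coupled angular momenta at the fixed point `p₊,₊`. -/
theorem CAM_charpoly_p_plus_plus (R₁ R₂ t : ℝ) (hR₁ : 0 < R₁) (hR₂ : 0 < R₂) :
    (!![0, -1 / R₁ - 1, 0, t / R₁;
        1 / R₁ + 1, 0, -t / R₁, 0;
        0, t / R₂, 0, -t / R₂ - 1;
        -t / R₂, 0, t / R₂ + 1, 0] : Matrix (Fin 4) (Fin 4) ℝ).charpoly =
      X ^ 4 +
        C (1 / R₁ ^ 2 + 2 * (t ^ 2 + R₂) / (R₁ * R₂) + t * (t + 2 * R₂) / R₂ ^ 2 + 2) * X ^ 2 +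
        C ((-t ^ 2 + t * R₁ + t + R₁ * R₂ + R₂) ^ 2 / (R₁ ^ 2 * R₂ ^ 2)) := by
  rw [Matrix.charpoly]
  simp (config := { decide := true }) [Matrix.det_succ_row_zero, Fin.sum_univ_succ,
    charmatrix_apply, Matrix.one_apply, Fin.succAbove, Matrix.diagonal_apply,
    Fin.succ, show ((2 : Fin 3).castSucc : Fin 4) = 2 from rfl]
  apply Polynomial.funext
  intro x
  simp only [eval_add, eval_mul, eval_pow, eval_sub, eval_neg, eval_C, eval_X, eval_one,
    eval_ofNat, Matrix.cons_val_zero, Matrix.cons_val_one, Matrix.head_cons]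
  have h1 : R₁ ≠ 0 := hR₁.ne'
  have h2 : R₂ ≠ 0 := hR₂.ne'
  field_simp
  ring
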